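/- The set of n × n matrices over a Kleene algebra forms a Kleene algebra, with matrix addition and multiplication, zero matrix, identity matrix, and star defined inductively via the 2 × 2 block formula E* = [[F*, F* B D*],[D* C F*, D* + D* C F* B D*]] where E = [[A,B],[C,D]] and F = A + B D* C. -/

import Mathlib

open Matrix Computability

namespace MatKAProof

variable {K : Type} [KleeneAlgebra K]

section MLE

variable {ι κ μ ν : Type}

/-- Componentwise order on matrices. -/
def MLE (M N : Matrix ι κ K) : Prop := ∀ i j, M i j ≤ N i j

scoped infix:50 " ≼ " => MLE

lemma MLE.rfl (M : Matrix ι κ K) : M ≼ M := fun _ _ => le_refl _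

lemma MLE.trans {M N P : Matrix ι κ K} (h1 : M ≼ N) (h2 : N ≼ P) : M ≼ P :=
  fun i j => (h1 i j).trans (h2 i j)

lemma MLE.antisymm {M N : Matrix ι κ K} (h1 : M ≼ N) (h2 : N ≼ M) : M = N := by
  ext i j; exact le_antisymm (h1 i j) (h2 i j)

lemma add_mle {A B X : Matrix ι κ K} (h1 : A ≼ X) (h2 : B ≼ X) : A + B ≼ X :=
  fun i j => add_le (h1 i j) (h2 i j)

lemma mle_add_left (A B : Matrix ι κ K) : A ≼ A + B := fun _ _ => le_self_add

lemma mle_add_right (A B : Matrix ι κ K) : B ≼ A + B := fun _ _ => le_add_self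

lemma MLE.of_add_left {A B X : Matrix ι κ K} (h : A + B ≼ X) : A ≼ X :=
  (mle_add_left A B).trans h

lemma MLE.of_add_right {A B X : Matrix ι κ K} (h : A + B ≼ X) : B ≼ X :=
  (mle_add_right A B).trans h

lemma mul_mle_mul [Fintype κ] {A B : Matrix ι κ K} {C D : Matrix κ μ K}
    (h1 : A ≼ B) (h2 : C ≼ D) : A * C ≼ B * D := fun i j => by
  rw [Matrix.mul_apply, Matrix.mul_apply]
  exact Finset.sum_le_sum fun k _ => mul_le_mul' (h1 i k) (h2 k j)

lemma MLE.mulr [Fintype κ] {A B : Matrix ι κ K} (h : A ≼ B) (M : Matrix κ μ K) :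
    A * M ≼ B * M := mul_mle_mul h (MLE.rfl M)

lemma MLE.mull [Fintype κ] {A B : Matrix κ μ K} (M : Matrix ι κ K) (h : A ≼ B) :
    M * A ≼ M * B := mul_mle_mul (MLE.rfl M) h

lemma fromBlocks_mle {ι' κ' : Type} {A A' : Matrix ι ι' K} {B B' : Matrix ι κ' K}
    {C C' : Matrix κ ι' K} {D D' : Matrix κ κ' K}
    (hA : A ≼ A') (hB : B ≼ B') (hC : C ≼ C') (hD : D ≼ D') :
    fromBlocks A B C D ≼ fromBlocks A' B' C' D' := by
  rintro (i | i) (j | j)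
  · exact hA i j
  · exact hB i j
  · exact hC i j
  · exact hD i j

lemma fromRows_mle {A A' : Matrix ι μ K} {B B' : Matrix κ μ K}
    (hA : A ≼ A') (hB : B ≼ B') : fromRows A B ≼ fromRows A' B' := by
  rintro (i | i) j
  · exact hA i j
  · exact hB i j

lemma fromColumns_mle {A A' : Matrix μ ι K} {B B' : Matrix μ κ K}
    (hA : A ≼ A') (hB : B ≼ B') : fromCols A B ≼ fromCols A' B' := by
  rintro i (j | j)
  · exact hA i j
  · exact hB i j

end MLE

/-- `x` behaves like the Kleene star of the matrix `E`. -/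
structure IsStarOf {ι : Type} [Fintype ι] [DecidableEq ι] (E x : Matrix ι ι K) : Prop where
  unfoldl : 1 + E * x ≼ x
  unfoldr : 1 + x * E ≼ x
  indl : ∀ {μ : Type} (B X : Matrix ι μ K), B + E * X ≼ X → x * B ≼ X
  indr : ∀ {μ : Type} (B X : Matrix μ ι K), B + X * E ≼ X → B * x ≼ X

namespace IsStarOf

variable {ι κ : Type} [Fintype ι] [DecidableEq ι] [Fintype κ] [DecidableEq κ]

lemma one_mle {E x : Matrix ι ι K} (h : IsStarOf E x) : 1 ≼ x :=
  (mle_add_left _ _).trans h.unfoldl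

lemma mul_mle {E x : Matrix ι ι K} (h : IsStarOf E x) : E * x ≼ x :=
  (mle_add_right _ _).trans h.unfoldl

lemma mle_mul {E x : Matrix ι ι K} (h : IsStarOf E x) : x * E ≼ x :=
  (mle_add_right _ _).trans h.unfoldr

lemma unique {E x y : Matrix ι ι K} (hx : IsStarOf E x) (hy : IsStarOf E y) : x = y := by
  refine MLE.antisymm ?_ ?_
  · have := hx.indl 1 y hy.unfoldl
    rwa [mul_one] at this
  · have := hy.indl 1 x hx.unfoldl
    rwa [mul_one] at this

end IsStarOf

section Blocks

variable {ι κ : Type} [Fintype ι] [DecidableEq ι] [Fintype κ] [DecidableEq κ]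
variable {A : Matrix ι ι K} {B : Matrix ι κ K} {C : Matrix κ ι K} {D : Matrix κ κ K}
variable {d : Matrix κ κ K} {f : Matrix ι ι K}

theorem isStarOf_fromBlocks (hd : IsStarOf D d) (hf : IsStarOf (A + B * d * C) f) :
    IsStarOf (fromBlocks A B C D)
      (fromBlocks f (f * B * d) (d * C * f) (d + d * C * f * B * d)) := by
  -- basic facts
  have h1f : (1 : Matrix ι ι K) ≼ f := hf.one_mle
  have h1d : (1 : Matrix κ κ K) ≼ d := hd.one_mle
  have hAf : A * f ≼ f := ((mle_add_left A (B * d * C)).mulr f).trans hf.mul_mle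
  have hBdCf : B * d * C * f ≼ f := ((mle_add_right A (B * d * C)).mulr f).trans hf.mul_mle
  have hfA : f * A ≼ f := (MLE.mull f (mle_add_left A (B * d * C))).trans hf.mle_mul
  have hfBdC : f * (B * d * C) ≼ f := (MLE.mull f (mle_add_right A (B * d * C))).trans hf.mle_mul
  have hDd : D * d ≼ d := hd.mul_mle
  have hdD : d * D ≼ d := hd.mle_mul
  constructor
  · -- 1 + E * G ≼ G
    rw [← fromBlocks_one, fromBlocks_multiply, fromBlocks_add]
    refine fromBlocks_mle ?_ ?_ ?_ ?_
    · simpa only [Matrix.add_mul, Matrix.mul_assoc] using hf.unfoldl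
    · rw [zero_add, Matrix.mul_add]
      refine add_mle ?_ (add_mle ?_ ?_)
      · simpa only [Matrix.mul_assoc] using hAf.mulr (B * d)
      · simpa only [Matrix.mul_assoc, Matrix.one_mul] using h1f.mulr (B * d)
      · simpa only [Matrix.mul_assoc] using hBdCf.mulr (B * d)
    · rw [zero_add]
      refine add_mle ?_ ?_
      · simpa only [Matrix.mul_assoc, Matrix.one_mul] using h1d.mulr (C * f)
      · simpa only [Matrix.mul_assoc] using hDd.mulr (C * f)
    · rw [Matrix.mul_add]
      refine add_mle (h1d.trans (mle_add_left d _)) (add_mle ?_ (add_mle ?_ ?_))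
      · refine MLE.trans ?_ (mle_add_right d _)
        simpa only [Matrix.mul_assoc, Matrix.one_mul] using h1d.mulr (C * (f * B * d))
      · exact hDd.trans (mle_add_left d _)
      · refine MLE.trans ?_ (mle_add_right d _)
        simpa only [Matrix.mul_assoc] using hDd.mulr (C * f * B * d)
  · -- 1 + G * E ≼ G
    rw [← fromBlocks_one, fromBlocks_multiply, fromBlocks_add]
    refine fromBlocks_mle ?_ ?_ ?_ ?_
    · simpa only [Matrix.mul_add, Matrix.mul_assoc] using hf.unfoldr
    · rw [zero_add]
      refine add_mle ?_ ?_
      · simpa only [Matrix.mul_one, Matrix.mul_assoc] using MLE.mull (f * B) h1d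
      · simpa only [Matrix.mul_assoc] using MLE.mull (f * B) hdD
    · rw [zero_add, Matrix.add_mul]
      refine add_mle ?_ (add_mle ?_ ?_)
      · simpa only [Matrix.mul_assoc] using MLE.mull (d * C) hfA
      · simpa only [Matrix.mul_one, Matrix.mul_assoc] using MLE.mull (d * C) h1f
      · have : d * C * (f * (B * d * C)) ≼ d * C * f := MLE.mull (d * C) hfBdC
        simpa only [Matrix.mul_assoc] using this
    · rw [Matrix.add_mul]
      refine add_mle (h1d.trans (mle_add_left d _)) (add_mle ?_ (add_mle ?_ ?_))
      · refine MLE.trans ?_ (mle_add_right d _)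
        simpa only [Matrix.mul_one, Matrix.mul_assoc] using MLE.mull (d * C * f * B) h1d
      · exact hdD.trans (mle_add_left d _)
      · refine MLE.trans ?_ (mle_add_right d _)
        simpa only [Matrix.mul_assoc] using MLE.mull (d * C * f * B) hdD
  · -- left induction
    intro μ Bm X h
    have hB : Bm ≼ X := MLE.of_add_left h
    have hEX : fromBlocks A B C D * X ≼ X := MLE.of_add_right h
    suffices hGX : fromBlocks f (f * B * d) (d * C * f) (d + d * C * f * B * d) * X ≼ X by
      exact (MLE.mull _ hB).trans hGX
    rw [← fromRows_toRows X, fromBlocks_mul_fromRows]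
    rw [← fromRows_toRows X, fromBlocks_mul_fromRows] at hEX
    set P := X.toRows₁; set R := X.toRows₂
    have h11 : A * P + B * R ≼ P := fun i j => by simpa using hEX (Sum.inl i) j
    have h21 : C * P + D * R ≼ R := fun i j => by simpa using hEX (Sum.inr i) j
    have hdR : d * R ≼ R := hd.indl R R (add_mle (MLE.rfl R) (MLE.of_add_right h21))
    have hdCP : d * (C * P) ≼ R := hd.indl (C * P) R
      (add_mle (MLE.of_add_left h21) (MLE.of_add_right h21))
    have hBR : B * R ≼ P := MLE.of_add_right h11
    have hFP : (A + B * d * C) * P ≼ P := by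
      rw [Matrix.add_mul]
      refine add_mle (MLE.of_add_left h11) ?_
      have : B * d * C * P ≼ B * R := by
        simpa only [Matrix.mul_assoc] using MLE.mull B hdCP
      exact this.trans hBR
    have hfP : f * P ≼ P := hf.indl P P (add_mle (MLE.rfl P) hFP)
    refine fromRows_mle ?_ ?_
    · -- f * P + f * B * d * R ≼ P
      refine add_mle hfP ?_
      have h0 : f * B * d * R ≼ f * (B * R) := by
        simpa only [Matrix.mul_assoc] using MLE.mull (f * B) hdR
      exact h0.trans ((MLE.mull f hBR).trans hfP)
    · -- d * C * f * P + (d + d * C * f * B * d) * R ≼ R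
      rw [Matrix.add_mul]
      refine add_mle ?_ (add_mle hdR ?_)
      · have h0 : d * C * f * P ≼ d * (C * P) := by
          simpa only [Matrix.mul_assoc] using MLE.mull (d * C) hfP
        exact h0.trans hdCP
      · have h0 : d * C * f * B * d * R ≼ d * C * f * (B * R) := by
          simpa only [Matrix.mul_assoc] using MLE.mull (d * C * f * B) hdR
        refine h0.trans ?_
        have h1 : d * C * f * (B * R) ≼ d * C * (f * P) := by
          simpa only [Matrix.mul_assoc] using MLE.mull (d * C) (MLE.mull f hBR)
        refine h1.trans ?_
        have h2 : d * C * (f * P) ≼ d * (C * P) := by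
          simpa only [Matrix.mul_assoc] using MLE.mull (d * C) hfP
        exact h2.trans hdCP
  · -- right induction
    intro μ Bm X h
    have hB : Bm ≼ X := MLE.of_add_left h
    have hXE : X * fromBlocks A B C D ≼ X := MLE.of_add_right h
    suffices hXG : X * fromBlocks f (f * B * d) (d * C * f) (d + d * C * f * B * d) ≼ X by
      exact (hB.mulr _).trans hXG
    rw [← fromCols_toCols X, fromCols_mul_fromBlocks]
    rw [← fromCols_toCols X, fromCols_mul_fromBlocks] at hXE
    set P := X.toCols₁; set Q := X.toCols₂
    have h11 : P * A + Q * C ≼ P := fun i j => by simpa using hXE i (Sum.inl j)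
    have h12 : P * B + Q * D ≼ Q := fun i j => by simpa using hXE i (Sum.inr j)
    have hQd : Q * d ≼ Q := hd.indr Q Q (add_mle (MLE.rfl Q) (MLE.of_add_right h12))
    have hPBd : P * B * d ≼ Q := hd.indr (P * B) Q
      (add_mle (MLE.of_add_left h12) (MLE.of_add_right h12))
    have hQC : Q * C ≼ P := MLE.of_add_right h11
    have hPF : P * (A + B * d * C) ≼ P := by
      rw [Matrix.mul_add]
      refine add_mle (MLE.of_add_left h11) ?_
      have : P * (B * d * C) ≼ Q * C := by
        simpa only [Matrix.mul_assoc] using hPBd.mulr C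
      exact this.trans hQC
    have hPf : P * f ≼ P := hf.indr P P (add_mle (MLE.rfl P) hPF)
    refine fromColumns_mle ?_ ?_
    · -- P * f + Q * (d * C * f) ≼ P
      refine add_mle hPf ?_
      have h0 : Q * (d * C * f) ≼ Q * (C * f) := by
        simpa only [Matrix.mul_assoc] using hQd.mulr (C * f)
      refine h0.trans ?_
      have h1 : Q * (C * f) ≼ P * f := by
        simpa only [Matrix.mul_assoc] using hQC.mulr f
      exact h1.trans hPf
    · -- P * (f * B * d) + Q * (d + d * C * f * B * d) ≼ Q
      rw [Matrix.mul_add]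
      refine add_mle ?_ (add_mle hQd ?_)
      · have h0 : P * (f * B * d) ≼ P * B * d := by
          simpa only [Matrix.mul_assoc] using (hPf.mulr B).mulr d
        exact h0.trans hPBd
      · have h0 : Q * (d * C * f * B * d) ≼ Q * (C * f * B * d) := by
          simpa only [Matrix.mul_assoc] using hQd.mulr (C * f * B * d)
        refine h0.trans ?_
        have h1 : Q * (C * f * B * d) ≼ P * (f * B * d) := by
          simpa only [Matrix.mul_assoc] using hQC.mulr (f * B * d)
        refine h1.trans ?_
        have h2 : P * (f * B * d) ≼ P * B * d := by
          simpa only [Matrix.mul_assoc] using (hPf.mulr B).mulr d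
        exact h2.trans hPBd

end Blocks

section Base

variable {ι : Type} [Fintype ι] [DecidableEq ι]

lemma isStarOf_empty [IsEmpty ι] (E : Matrix ι ι K) : IsStarOf E E where
  unfoldl := fun i _ => isEmptyElim i
  unfoldr := fun i _ => isEmptyElim i
  indl := fun _ _ _ i _ => isEmptyElim i
  indr := fun _ _ _ _ j => isEmptyElim j

lemma isStarOf_subsingleton [Subsingleton ι] [Nonempty ι] (E : Matrix ι ι K) :
    IsStarOf E (Matrix.of fun i j => (E i j)∗) := by
  have hsum : ∀ (f : ι → K) (a : ι), ∑ k, f k = f a := fun f a =>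
    Fintype.sum_subsingleton f a
  constructor
  · intro i j
    obtain rfl : j = i := Subsingleton.elim j i
    rw [Matrix.add_apply, Matrix.mul_apply, hsum _ j, Matrix.one_apply_eq]
    exact add_le one_le_kstar mul_kstar_le_kstar
  · intro i j
    obtain rfl : j = i := Subsingleton.elim j i
    rw [Matrix.add_apply, Matrix.mul_apply, hsum _ j, Matrix.one_apply_eq]
    exact add_le one_le_kstar kstar_mul_le_kstar
  · intro μ B X h i j
    have hh := h i j
    rw [Matrix.add_apply, Matrix.mul_apply, hsum _ i] at hh
    rw [Matrix.mul_apply, hsum _ i]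
    exact kstar_mul_le (add_le_iff.mp hh).1 (add_le_iff.mp hh).2
  · intro μ B X h i j
    have hh := h i j
    rw [Matrix.add_apply, Matrix.mul_apply, hsum _ j] at hh
    rw [Matrix.mul_apply, hsum _ j]
    exact mul_kstar_le (add_le_iff.mp hh).1 (add_le_iff.mp hh).2

end Base

section Reindex

variable {ι κ μ : Type} [Fintype ι] [DecidableEq ι] [Fintype κ] [DecidableEq κ]

lemma re_mul (e : ι ≃ κ) (M N : Matrix ι ι K) :
    Matrix.reindex e e (M * N) = Matrix.reindex e e M * Matrix.reindex e e N := by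
  simp only [Matrix.reindex_apply]
  rw [Matrix.submatrix_mul_equiv M N _ e.symm _]

lemma re_one (e : ι ≃ κ) : Matrix.reindex e e (1 : Matrix ι ι K) = 1 := by
  simp only [Matrix.reindex_apply]
  exact Matrix.submatrix_one_equiv e.symm

lemma re_add (e : ι ≃ κ) (M N : Matrix ι ι K) :
    Matrix.reindex e e (M + N) = Matrix.reindex e e M + Matrix.reindex e e N := rfl

lemma re_mle (e : ι ≃ κ) {M N : Matrix ι ι K} (h : MLE M N) :
    MLE (Matrix.reindex e e M) (Matrix.reindex e e N) := fun _ _ => h _ _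

lemma reindex_mul_rect (e : ι ≃ κ) (E : Matrix ι ι K) (X : Matrix κ μ K) :
    Matrix.reindex e e E * X = (E * X.submatrix e id).submatrix e.symm id := by
  rw [Matrix.reindex_apply, ← Matrix.submatrix_mul_equiv E (X.submatrix (e : ι → κ) id) e.symm e.symm id]
  congr 1
  ext i j
  simp

lemma rect_mul_reindex (e : ι ≃ κ) (E : Matrix ι ι K) (X : Matrix μ κ K) :
    X * Matrix.reindex e e E = (X.submatrix id (e : ι → κ) * E).submatrix id e.symm := by
  rw [Matrix.reindex_apply, ← Matrix.submatrix_mul_equiv (X.submatrix id (e : ι → κ)) E id e.symm e.symm]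
  congr 1
  ext i j
  simp

lemma IsStarOf.reindex (e : ι ≃ κ) {E x : Matrix ι ι K} (h : IsStarOf E x) :
    IsStarOf (Matrix.reindex e e E) (Matrix.reindex e e x) := by
  constructor
  · have := re_mle e h.unfoldl
    rwa [re_add, re_one, re_mul] at this
  · have := re_mle e h.unfoldr
    rwa [re_add, re_one, re_mul] at this
  · intro μ B X hBX
    rw [reindex_mul_rect] at hBX
    have h2 : B.submatrix (e : ι → κ) id + E * X.submatrix (e : ι → κ) id ≼
        X.submatrix (e : ι → κ) id := by
      intro i j
      have := hBX (e i) j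
      simpa using this
    have hind := h.indl _ _ h2
    rw [reindex_mul_rect]
    intro i j
    have := hind (e.symm i) j
    simpa using this
  · intro μ B X hBX
    rw [rect_mul_reindex] at hBX
    have h2 : B.submatrix id (e : ι → κ) + X.submatrix id (e : ι → κ) * E ≼
        X.submatrix id (e : ι → κ) := by
      intro i j
      have := hBX i (e j)
      simpa using this
    have hind := h.indr _ _ h2
    rw [rect_mul_reindex]
    intro i j
    have := hind i (e.symm j)
    simpa using this

end Reindex

theorem exists_isStarOf :
    ∀ (n : ℕ) (ι : Type) [Fintype ι] [DecidableEq ι], Fintype.card ι ≤ n →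
      ∀ E : Matrix ι ι K, ∃ x, IsStarOf E x := by
  intro n
  induction n with
  | zero =>
    intro ι _ _ hc E
    have : IsEmpty ι := Fintype.card_eq_zero_iff.mp (Nat.le_zero.mp hc)
    exact ⟨E, isStarOf_empty E⟩
  | succ n ih =>
    intro ι _ _ hc E
    rcases Nat.lt_or_ge (Fintype.card ι) 2 with h2 | h2
    · rcases Nat.lt_or_ge (Fintype.card ι) 1 with h1 | h1
      · have : IsEmpty ι := Fintype.card_eq_zero_iff.mp (by omega)
        exact ⟨E, isStarOf_empty E⟩
      · have hne : Nonempty ι := Fintype.card_pos_iff.mp (by omega)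
        have hss : Subsingleton ι := Fintype.card_le_one_iff_subsingleton.mp (by omega)
        exact ⟨_, isStarOf_subsingleton E⟩
    · obtain ⟨k, hk⟩ : ∃ k, Fintype.card ι = k + 2 := ⟨Fintype.card ι - 2, by omega⟩
      have e' : ι ≃ Fin (k + 1) ⊕ Fin 1 :=
        (Fintype.equivFinOfCardEq hk).trans
          ((finSumFinEquiv : Fin (k + 1) ⊕ Fin 1 ≃ Fin (k + 1 + 1))).symm
      set E' := Matrix.reindex e' e' E with hE'
      obtain ⟨d, hd⟩ := ih (Fin 1) (by rw [Fintype.card_fin]; omega) E'.toBlocks₂₂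
      obtain ⟨f, hf⟩ := ih (Fin (k + 1)) (by rw [Fintype.card_fin]; omega)
        (E'.toBlocks₁₁ + E'.toBlocks₁₂ * d * E'.toBlocks₂₁)
      have hG := isStarOf_fromBlocks hd hf
      rw [fromBlocks_toBlocks E'] at hG
      have hfin := hG.reindex e'.symm
      rw [hE'] at hfin
      rw [show Matrix.reindex e'.symm e'.symm (Matrix.reindex e' e' E) = E by
        rw [← Matrix.reindex_symm]; exact (Matrix.reindex e' e').symm_apply_apply E] at hfin
      exact ⟨_, hfin⟩

end MatKAProof

open Matrix MatKAProof

/-- Square matrices over a Kleene algebra form a Kleene algebra: there is a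
star operation on `n × n` matrices (for every finite index type) satisfying
the Kleene algebra axioms with respect to the componentwise order, and on
block matrices it is given inductively by the `2 × 2` block formula
`E* = [[F*, F* B D*], [D* C F*, D* + D* C F* B D*]]` where
`E = [[A, B], [C, D]]` and `F = A + B D* C`. -/
theorem matrices_form_kleeneAlgebra {K : Type} [KleeneAlgebra K] :
    ∃ S : ∀ (ι : Type) [Fintype ι] [DecidableEq ι], Matrix ι ι K → Matrix ι ι K,
      (∀ (ι : Type) [Fintype ι] [DecidableEq ι] (E : Matrix ι ι K),
        ∀ i j, ((1 : Matrix ι ι K) + E * S ι E) i j ≤ S ι E i j) ∧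
      (∀ (ι : Type) [Fintype ι] [DecidableEq ι] (E : Matrix ι ι K),
        ∀ i j, ((1 : Matrix ι ι K) + S ι E * E) i j ≤ S ι E i j) ∧
      (∀ (ι : Type) [Fintype ι] [DecidableEq ι] (A B X : Matrix ι ι K),
        (∀ i j, (B + A * X) i j ≤ X i j) → ∀ i j, (S ι A * B) i j ≤ X i j) ∧
      (∀ (ι : Type) [Fintype ι] [DecidableEq ι] (A B X : Matrix ι ι K),
        (∀ i j, (B + X * A) i j ≤ X i j) → ∀ i j, (B * S ι A) i j ≤ X i j) ∧
      (∀ (ι κ : Type) [Fintype ι] [DecidableEq ι] [Fintype κ] [DecidableEq κ]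
        (A : Matrix ι ι K) (B : Matrix ι κ K) (C : Matrix κ ι K)
        (D : Matrix κ κ K),
        S (ι ⊕ κ) (Matrix.fromBlocks A B C D) =
          Matrix.fromBlocks
            (S ι (A + B * S κ D * C))
            (S ι (A + B * S κ D * C) * B * S κ D)
            (S κ D * C * S ι (A + B * S κ D * C))
            (S κ D + S κ D * C * S ι (A + B * S κ D * C) * B * S κ D)) := by
  classical
  let S : ∀ (ι : Type) [Fintype ι] [DecidableEq ι], Matrix ι ι K → Matrix ι ι K :=
    fun ι _ _ E => Classical.choose (exists_isStarOf (Fintype.card ι) ι le_rfl E)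
  have hS : ∀ (ι : Type) [Fintype ι] [DecidableEq ι] (E : Matrix ι ι K),
      IsStarOf E (S ι E) :=
    fun ι _ _ E => Classical.choose_spec (exists_isStarOf (Fintype.card ι) ι le_rfl E)
  refine ⟨S, ?_, ?_, ?_, ?_, ?_⟩
  · exact fun ι _ _ E => (hS ι E).unfoldl
  · exact fun ι _ _ E => (hS ι E).unfoldr
  · exact fun ι _ _ A B X h => (hS ι A).indl B X h
  · exact fun ι _ _ A B X h => (hS ι A).indr B X h
  · intro ι κ _ _ _ _ A B C D
    exact IsStarOf.unique (hS (ι ⊕ κ) (Matrix.fromBlocks A B C D))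
      (isStarOf_fromBlocks (hS κ D) (hS ι (A + B * S κ D * C)))
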